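/- For any permutation π of {1,…,n} and any pattern p ∈ {312, 231, 213, 132}, there exists a p-avoiding permutation σ of {1,…,n} such that σ∘π is a cyclic permutation. -/

import Mathlib

open Equiv Equiv.Perm

/-- `σ` contains the pattern `p ∈ S₃`. -/
def ContainsPat {n : ℕ} (p : Equiv.Perm (Fin 3)) (σ : Equiv.Perm (Fin n)) : Prop :=
  ∃ f : Fin 3 → Fin n, StrictMono f ∧ ∀ a b : Fin 3, p a < p b ↔ σ (f a) < σ (f b)

noncomputable def pat312 : Equiv.Perm (Fin 3) := Equiv.ofBijective ![2, 0, 1] (by decide)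
noncomputable def pat231 : Equiv.Perm (Fin 3) := Equiv.ofBijective ![1, 2, 0] (by decide)
noncomputable def pat213 : Equiv.Perm (Fin 3) := Equiv.ofBijective ![1, 0, 2] (by decide)
noncomputable def pat132 : Equiv.Perm (Fin 3) := Equiv.ofBijective ![0, 2, 1] (by decide)

/-- A permutation is cyclic if it has exactly one orbit. -/
def IsCyclicPerm {n : ℕ} (σ : Equiv.Perm (Fin n)) : Prop :=
  ∀ x y : Fin n, σ.SameCycle x y

/-- Extend a permutation of `Fin n` to `Fin (n+1)` fixing `0`. -/
def ext0 {n : ℕ} (e : Equiv.Perm (Fin n)) : Equiv.Perm (Fin (n + 1)) where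
  toFun := Fin.cases 0 (fun x => (e x).succ)
  invFun := Fin.cases 0 (fun x => (e⁻¹ x).succ)
  left_inv := by
    intro x
    cases x using Fin.cases <;> simp
  right_inv := by
    intro x
    cases x using Fin.cases <;> simp

@[simp] lemma ext0_zero {n : ℕ} (e : Equiv.Perm (Fin n)) : ext0 e 0 = 0 := rfl
@[simp] lemma ext0_succ {n : ℕ} (e : Equiv.Perm (Fin n)) (x : Fin n) :
    ext0 e x.succ = (e x).succ := rfl

lemma ext0_mul {n : ℕ} (a b : Equiv.Perm (Fin n)) : ext0 (a * b) = ext0 a * ext0 b := by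
  apply Equiv.ext
  intro x
  cases x using Fin.cases <;> simp [Equiv.Perm.mul_apply]

lemma exists_ext0 {n : ℕ} (π : Equiv.Perm (Fin (n + 1))) :
    ∃ e : Equiv.Perm (Fin n), π = Equiv.swap 0 (π 0) * ext0 e := by
  set σ : Equiv.Perm (Fin (n + 1)) := Equiv.swap 0 (π 0) * π with hσ
  have hσ0 : σ 0 = 0 := by simp [hσ, Equiv.Perm.mul_apply]
  have hne : ∀ x : Fin n, σ x.succ ≠ 0 := by
    intro x h
    exact (Fin.succ_ne_zero x) (σ.injective (h.trans hσ0.symm))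
  have hg : Function.Injective (fun x : Fin n => (σ x.succ).pred (hne x)) := by
    intro x y h
    have : σ x.succ = σ y.succ := by
      have := congrArg Fin.succ h
      simpa [Fin.succ_pred] using this
    exact Fin.succ_injective _ (σ.injective this)
  refine ⟨Equiv.ofBijective _ (Finite.injective_iff_bijective.mp hg), ?_⟩
  have hext : ext0 (Equiv.ofBijective _ (Finite.injective_iff_bijective.mp hg)) = σ := by
    apply Equiv.ext
    intro x
    cases x using Fin.cases with
    | zero => simp [hσ0]
    | succ x => simp [Equiv.ofBijective_apply, Fin.succ_pred]
  rw [hext, hσ, ← mul_assoc, Equiv.swap_mul_self, one_mul]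

lemma contains312_iff {n : ℕ} (σ : Equiv.Perm (Fin n)) :
    ContainsPat pat312 σ ↔ ∃ i j k : Fin n, i < j ∧ j < k ∧ σ j < σ k ∧ σ k < σ i := by
  constructor
  · rintro ⟨f, hf, h⟩
    exact ⟨f 0, f 1, f 2, hf (by decide), hf (by decide),
      (h 1 2).mp (by decide), (h 2 0).mp (by decide)⟩
  · rintro ⟨i, j, k, hij, hjk, h1, h2⟩
    refine ⟨![i, j, k], ?_, ?_⟩
    · intro a b hab
      fin_cases a <;> fin_cases b <;>
        first
          | exact absurd hab (by decide)
          | exact hij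
          | exact hjk
          | exact hij.trans hjk
    · intro a b
      have hik := h1.trans h2
      fin_cases a <;> fin_cases b <;>
        first
          | exact iff_of_true (by decide) hik
          | exact iff_of_true (by decide) h1
          | exact iff_of_true (by decide) h2
          | exact iff_of_false (by decide) (lt_irrefl _)
          | exact iff_of_false (by decide) hik.asymm
          | exact iff_of_false (by decide) h1.asymm
          | exact iff_of_false (by decide) h2.asymm

lemma avoid_ext0 {n : ℕ} {τ : Equiv.Perm (Fin n)} (h : ¬ ContainsPat pat312 τ) :
    ¬ ContainsPat pat312 (ext0 τ) := by
  rw [contains312_iff] at *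
  rintro ⟨i, j, k, hij, hjk, h1, h2⟩
  apply h
  have hi : i ≠ 0 := by
    rintro rfl
    have h2' : (ext0 τ) k < 0 := by simpa using h2
    exact absurd h2' (Fin.not_lt_zero _)
  obtain ⟨i', rfl⟩ : ∃ i', i = i'.succ := ⟨i.pred hi, (Fin.succ_pred _ _).symm⟩
  have hj : j ≠ 0 := Fin.pos_iff_ne_zero.mp (lt_of_le_of_lt (Fin.zero_le _) hij)
  obtain ⟨j', rfl⟩ : ∃ j', j = j'.succ := ⟨j.pred hj, (Fin.succ_pred _ _).symm⟩
  have hk : k ≠ 0 := Fin.pos_iff_ne_zero.mp (lt_of_le_of_lt (Fin.zero_le _) hjk)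
  obtain ⟨k', rfl⟩ : ∃ k', k = k'.succ := ⟨k.pred hk, (Fin.succ_pred _ _).symm⟩
  exact ⟨i', j', k', Fin.succ_lt_succ_iff.mp hij, Fin.succ_lt_succ_iff.mp hjk,
    by simpa [Fin.succ_lt_succ_iff] using h1, by simpa [Fin.succ_lt_succ_iff] using h2⟩

lemma avoid_caseB {m : ℕ} {τ : Equiv.Perm (Fin (m + 1))} (h : ¬ ContainsPat pat312 τ) :
    ¬ ContainsPat pat312 (ext0 τ * Equiv.swap 0 (τ⁻¹ 0).succ) := by
  rw [contains312_iff] at *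
  rintro ⟨i, j, k, hij, hjk, h1, h2⟩
  apply h
  set d := τ⁻¹ 0 with hd
  set w := ext0 τ * Equiv.swap 0 d.succ with hw
  have htd : τ d = 0 := Equiv.apply_symm_apply τ 0
  have hw0 : w 0 = (0 : Fin (m + 1)).succ := by
    simp [hw, Equiv.Perm.mul_apply, Equiv.swap_apply_left, htd]
  have hwd : w d.succ = 0 := by
    simp [hw, Equiv.Perm.mul_apply, Equiv.swap_apply_right]
  have hws : ∀ x : Fin (m + 1), x ≠ d → w x.succ = (τ x).succ := by
    intro x hx
    rw [hw, Equiv.Perm.mul_apply,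
      Equiv.swap_apply_of_ne_of_ne (Fin.succ_ne_zero x) (by simpa [Fin.succ_inj] using hx),
      ext0_succ]
  have hk0 : k ≠ 0 := Fin.pos_iff_ne_zero.mp (lt_of_le_of_lt (Fin.zero_le _) hjk)
  obtain ⟨k', rfl⟩ : ∃ k', k = k'.succ := ⟨k.pred hk0, (Fin.succ_pred _ _).symm⟩
  by_cases hkd : k' = d
  · subst hkd
    rw [hwd] at h1
    exact absurd h1 (Fin.not_lt_zero _)
  by_cases hi0 : i = 0
  · subst hi0
    rw [hw0, hws k' hkd] at h2
    exact absurd (Fin.succ_lt_succ_iff.mp h2) (Fin.not_lt_zero _)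
  obtain ⟨i', rfl⟩ : ∃ i', i = i'.succ := ⟨i.pred hi0, (Fin.succ_pred _ _).symm⟩
  have hj0 : j ≠ 0 := Fin.pos_iff_ne_zero.mp (lt_of_le_of_lt (Fin.zero_le _) hij)
  obtain ⟨j', rfl⟩ : ∃ j', j = j'.succ := ⟨j.pred hj0, (Fin.succ_pred _ _).symm⟩
  by_cases hid : i' = d
  · subst hid
    rw [hwd] at h2
    exact absurd h2 (Fin.not_lt_zero _)
  by_cases hjd : j' = d
  · subst hjd
    rw [hws k' hkd, hws i' hid] at h2
    have htk : τ d < τ k' := by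
      rw [htd]
      exact Fin.pos_iff_ne_zero.mpr fun hz => hkd (by rw [hd, ← hz, Equiv.Perm.inv_def, Equiv.symm_apply_apply])
    exact ⟨i', d, k', Fin.succ_lt_succ_iff.mp hij, Fin.succ_lt_succ_iff.mp hjk, htk,
      Fin.succ_lt_succ_iff.mp h2⟩
  · rw [hws j' hjd, hws k' hkd] at h1
    rw [hws k' hkd, hws i' hid] at h2
    exact ⟨i', j', k', Fin.succ_lt_succ_iff.mp hij, Fin.succ_lt_succ_iff.mp hjk,
      Fin.succ_lt_succ_iff.mp h1, Fin.succ_lt_succ_iff.mp h2⟩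

lemma cyclic_ins {n : ℕ} {ρ : Equiv.Perm (Fin n)} (h : IsCyclicPerm ρ) {m : Fin (n + 1)}
    (hm : m ≠ 0) : IsCyclicPerm (Equiv.swap 0 m * ext0 ρ) := by
  obtain ⟨w, rfl⟩ : ∃ w : Fin n, m = w.succ := ⟨m.pred hm, (Fin.succ_pred _ _).symm⟩
  set P : Equiv.Perm (Fin (n + 1)) := Equiv.swap 0 w.succ * ext0 ρ with hP
  have hP0 : P 0 = w.succ := by simp [hP, Equiv.Perm.mul_apply, Equiv.swap_apply_left]
  have key : ∀ z : Fin n, P.SameCycle 0 z.succ := by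
    intro z
    obtain ⟨k, -, hkz⟩ := (h w z).exists_pow_eq'
    induction k generalizing z with
    | zero =>
      simp only [pow_zero, Equiv.Perm.one_apply] at hkz
      subst hkz
      rw [← hP0]
      exact Equiv.Perm.sameCycle_apply_right.mpr (Equiv.Perm.SameCycle.refl _ _)
    | succ k ih =>
      rw [pow_succ', Equiv.Perm.mul_apply] at hkz
      set u := (ρ ^ k) w with hu
      have ihu : P.SameCycle 0 u.succ := ih u rfl
      subst hkz
      by_cases hc : ρ u = w
      · rw [hc, ← hP0]
        exact Equiv.Perm.sameCycle_apply_right.mpr (Equiv.Perm.SameCycle.refl _ _)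
      · have hstep : P u.succ = (ρ u).succ := by
          rw [hP, Equiv.Perm.mul_apply, ext0_succ,
            Equiv.swap_apply_of_ne_of_ne (Fin.succ_ne_zero _)
              (by simpa [Fin.succ_inj] using hc)]
        have : P.SameCycle u.succ (ρ u).succ := by
          rw [← hstep]
          exact Equiv.Perm.sameCycle_apply_right.mpr (Equiv.Perm.SameCycle.refl _ _)
        exact ihu.trans this
  intro x y
  have hx : P.SameCycle 0 x := by
    cases x using Fin.cases with
    | zero => exact Equiv.Perm.SameCycle.refl _ _
    | succ x => exact key x
  have hy : P.SameCycle 0 y := by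
    cases y using Fin.cases with
    | zero => exact Equiv.Perm.SameCycle.refl _ _
    | succ y => exact key y
  exact hx.symm.trans hy

lemma mul_swap_ext0 {n : ℕ} (e f : Equiv.Perm (Fin n)) (s : Fin (n + 1)) :
    ext0 e * Equiv.swap 0 s * ext0 f = Equiv.swap 0 (ext0 e s) * ext0 (e * f) := by
  have h2 : ext0 e * Equiv.swap 0 s = Equiv.swap (ext0 e 0) (ext0 e s) * ext0 e := by
    rw [Equiv.swap_apply_apply]
    group
  rw [ext0_mul, ← mul_assoc, h2, ext0_zero, mul_assoc]

theorem base312 : ∀ (n : ℕ) (π : Equiv.Perm (Fin n)),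
    ∃ τ : Equiv.Perm (Fin n), ¬ ContainsPat pat312 τ ∧ IsCyclicPerm (τ * π) := by
  intro n
  induction n with
  | zero =>
    intro π
    refine ⟨1, ?_, ?_⟩
    · rintro ⟨f, -, -⟩
      exact (f 0).elim0
    · intro x
      exact x.elim0
  | succ n ih =>
    intro π
    cases n with
    | zero =>
      refine ⟨1, ?_, ?_⟩
      · rintro ⟨f, hf, -⟩
        have := hf (show (0 : Fin 3) < 1 by decide)
        rw [(Fin.fin_one_eq_zero (f 0)).trans (Fin.fin_one_eq_zero (f 1)).symm] at this
        exact lt_irrefl _ this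
      · intro x y
        rw [(Fin.fin_one_eq_zero x).trans (Fin.fin_one_eq_zero y).symm]
    | succ m =>
      obtain ⟨π', hπ⟩ := exists_ext0 π
      obtain ⟨τ', hτa, hτc⟩ := ih π'
      by_cases h0 : π 0 = 0
      · -- case B : π fixes 0
        have hπB : π = ext0 π' := by
          rw [hπ, h0, Equiv.swap_self, ← Equiv.Perm.one_def, one_mul]
        refine ⟨ext0 τ' * Equiv.swap 0 (τ'⁻¹ 0).succ, avoid_caseB hτa, ?_⟩
        have hmul : ext0 τ' * Equiv.swap 0 (τ'⁻¹ 0).succ * π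
            = Equiv.swap 0 (ext0 τ' (τ'⁻¹ 0).succ) * ext0 (τ' * π') := by
          rw [hπB, mul_swap_ext0]
        rw [hmul, ext0_succ]
        exact cyclic_ins hτc (Fin.succ_ne_zero _)
      · -- case A : π moves 0
        refine ⟨ext0 τ', avoid_ext0 hτa, ?_⟩
        have hmul : ext0 τ' * π = Equiv.swap 0 (ext0 τ' (π 0)) * ext0 (τ' * π') := by
          conv_lhs => rw [hπ]
          rw [← mul_assoc, mul_swap_ext0]
        rw [hmul]
        refine cyclic_ins hτc fun hz => h0 ?_
        exact (ext0 τ').injective (hz.trans (ext0_zero τ').symm)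

lemma contains_inv {n : ℕ} {p : Equiv.Perm (Fin 3)} {σ : Equiv.Perm (Fin n)}
    (h : ContainsPat p σ) : ContainsPat p⁻¹ σ⁻¹ := by
  obtain ⟨f, hf, hp⟩ := h
  refine ⟨fun a => σ (f (p⁻¹ a)), ?_, ?_⟩
  · intro a b hab
    exact (hp (p⁻¹ a) (p⁻¹ b)).mp (by simpa using hab)
  · intro a b
    simp only [Equiv.Perm.inv_def, Equiv.symm_apply_apply]
    exact hf.lt_iff_lt.symm

lemma contains_mul_rev {n : ℕ} {p : Equiv.Perm (Fin 3)} {σ : Equiv.Perm (Fin n)}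
    (h : ContainsPat p (σ * Fin.revPerm)) : ContainsPat (p * Fin.revPerm) σ := by
  obtain ⟨f, hf, hp⟩ := h
  refine ⟨fun a => (f (Fin.revPerm a)).rev, ?_, ?_⟩
  · intro a b hab
    exact Fin.rev_lt_rev.mpr (hf (Fin.rev_lt_rev.mpr hab))
  · intro a b
    have := hp (Fin.revPerm a) (Fin.revPerm b)
    simpa [Equiv.Perm.mul_apply, Fin.revPerm_apply] using this

lemma contains_rev_mul {n : ℕ} {p : Equiv.Perm (Fin 3)} {σ : Equiv.Perm (Fin n)}
    (h : ContainsPat (Fin.revPerm * p) (Fin.revPerm * σ)) : ContainsPat p σ := by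
  obtain ⟨f, hf, hp⟩ := h
  refine ⟨f, hf, fun a b => ?_⟩
  have := hp b a
  simp only [Equiv.Perm.mul_apply, Fin.revPerm_apply, Fin.rev_lt_rev] at this
  exact this

lemma isCyclic_inv {n : ℕ} {σ : Equiv.Perm (Fin n)} (h : IsCyclicPerm σ) :
    IsCyclicPerm σ⁻¹ := fun x y => Equiv.Perm.sameCycle_inv.mpr (h x y)

lemma isCyclic_conj {n : ℕ} {σ : Equiv.Perm (Fin n)} (g : Equiv.Perm (Fin n))
    (h : IsCyclicPerm σ) : IsCyclicPerm (g * σ * g⁻¹) :=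
  fun x y => Equiv.Perm.sameCycle_conj.mpr (h _ _)

lemma pat231_inv : pat231⁻¹ = pat312 :=
  Equiv.ext fun a => by fin_cases a <;> rw [Equiv.Perm.inv_eq_iff_eq] <;> rfl

lemma pat213_mul_rev : pat213 * Fin.revPerm = pat312 :=
  Equiv.ext fun a => by fin_cases a <;> rfl

lemma pat132_eq : pat132 = Fin.revPerm * pat312 :=
  Equiv.ext fun a => by fin_cases a <;> rfl

theorem stmt_1 (n : ℕ) (π : Equiv.Perm (Fin n)) (p : Equiv.Perm (Fin 3))
    (hp : p ∈ ({pat312, pat231, pat213, pat132} : Set (Equiv.Perm (Fin 3)))) :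
    ∃ σ : Equiv.Perm (Fin n), ¬ ContainsPat p σ ∧ IsCyclicPerm (σ * π) := by
  simp only [Set.mem_insert_iff, Set.mem_singleton_iff] at hp
  rcases hp with rfl | rfl | rfl | rfl
  · exact base312 n π
  · obtain ⟨τ, ha, hc⟩ := base312 n π⁻¹
    refine ⟨τ⁻¹, ?_, ?_⟩
    · intro hcon
      have h1 := contains_inv hcon
      rw [inv_inv, pat231_inv] at h1
      exact ha h1
    · have h2 : IsCyclicPerm (τ⁻¹ * (τ * π⁻¹) * τ⁻¹⁻¹) := isCyclic_conj _ hc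
      have h3 : τ⁻¹ * (τ * π⁻¹) * τ⁻¹⁻¹ = π⁻¹ * τ := by group
      rw [h3] at h2
      have h4 := isCyclic_inv h2
      rwa [mul_inv_rev, inv_inv] at h4
  · obtain ⟨τ, ha, hc⟩ := base312 n (Fin.revPerm * π)
    refine ⟨τ * Fin.revPerm, ?_, ?_⟩
    · intro hcon
      have h1 := contains_mul_rev hcon
      rw [pat213_mul_rev] at h1
      exact ha h1
    · rw [mul_assoc]
      exact hc
  · obtain ⟨τ, ha, hc⟩ := base312 n (π * Fin.revPerm)
    refine ⟨Fin.revPerm * τ, ?_, ?_⟩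
    · intro hcon
      rw [pat132_eq] at hcon
      exact ha (contains_rev_mul hcon)
    · have h2 : IsCyclicPerm (Fin.revPerm * (τ * (π * Fin.revPerm)) * Fin.revPerm⁻¹) :=
        isCyclic_conj _ hc
      have h3 : Fin.revPerm * (τ * (π * Fin.revPerm)) * Fin.revPerm⁻¹
          = Fin.revPerm * τ * π := by group
      rw [h3] at h2
      exact h2
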